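/- The function f(z) = (1 − z)² / z satisfies Re(z f'(z)/f(z)) < 0 for all z in the punctured unit disc E, but there exists z ∈ E with |z f'(z)/f(z) + 1| ≥ 1. -/

import Mathlib

open Complex

lemma aux_deriv (z : ℂ) (hz : z ≠ 0) :
    deriv (fun z : ℂ => (1 - z) ^ 2 / z) z
      = ((2 * (1 - z) ^ 1 * (-1)) * z - (1 - z) ^ 2 * 1) / z ^ 2 := by
  have h1 : HasDerivAt (fun z : ℂ => (1 - z) ^ 2) (2 * (1 - z) ^ 1 * (-1)) z := by
    have h0 : HasDerivAt (fun z : ℂ => 1 - z) (-1) z := by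
      exact (hasDerivAt_id' z).const_sub (1 : ℂ)
    simpa using h0.fun_pow 2
  exact ((h1.div (hasDerivAt_id z) hz)).deriv

lemma aux_eq (f : ℂ → ℂ) (hf : ∀ z : ℂ, f z = (1 - z) ^ 2 / z)
    (z : ℂ) (hz : z ≠ 0) (hz1 : (1 : ℂ) - z ≠ 0) :
    z * deriv f z / f z = -(1 + z) / (1 - z) := by
  have hfun : f = fun z : ℂ => (1 - z) ^ 2 / z := funext hf
  rw [hfun, aux_deriv z hz]
  field_simp
  ring

theorem stmt3 (f : ℂ → ℂ) (hf : ∀ z : ℂ, f z = (1 - z) ^ 2 / z) :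
    (∀ z : ℂ, 0 < ‖z‖ → ‖z‖ < 1 →
      (z * deriv f z / f z).re < 0) ∧
    (∃ z : ℂ, 0 < ‖z‖ ∧ ‖z‖ < 1 ∧
      1 ≤ ‖z * deriv f z / f z + 1‖) := by
  constructor
  · intro z h0 h1
    have hz : z ≠ 0 := by
      intro h; rw [h] at h0; simp at h0
    have hz1 : (1 : ℂ) - z ≠ 0 := by
      intro h
      have : z = 1 := by linear_combination -h
      rw [this] at h1; simp at h1
    rw [aux_eq f hf z hz hz1]
    rw [Complex.div_re, ← add_div]
    have hsq : Complex.normSq (1 - z) > 0 := by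
      simpa [Complex.normSq_pos] using hz1
    apply div_neg_of_neg_of_pos _ hsq
    have habs : z.re ^ 2 + z.im ^ 2 < 1 := by
      have := Complex.sq_norm z
      nlinarith [Complex.normSq_apply z, h1, norm_nonneg z]
    simp only [Complex.neg_re, Complex.neg_im, Complex.add_re, Complex.add_im,
      Complex.sub_re, Complex.sub_im, Complex.one_re, Complex.one_im]
    nlinarith
  · refine ⟨1/2, by norm_num, by norm_num, ?_⟩
    have hz : (1/2 : ℂ) ≠ 0 := by norm_num
    have hz1 : (1 : ℂ) - 1/2 ≠ 0 := by norm_num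
    rw [aux_eq f hf _ hz hz1]
    have : -(1 + (1/2 : ℂ)) / (1 - 1/2) + 1 = -2 := by norm_num
    rw [this]
    norm_num
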